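/- arXiv:1009.0943 — 2 statements merged into one kernel-verified Lean document; each statement's English description precedes it below -/
import Mathlib

section
/- Let c ∈ ℂ and R = ℂ[t, t^{-1}, u | u² = t⁴ − 2ct² + 1]. Let (P_{−3,k})_{k ≥ −4} be the sequence of complex numbers determined by the initial values P_{−3,−4} = 0, P_{−3,−3} = 1, P_{−3,−2} = 0, P_{−3,−1} = 0 and the recursion (6+2k)P_{−3,k} = 4kc·P_{−3,k−2} − 2(k−3)·P_{−3,k−4} for k ≥ 0. Then for every odd integer l ≤ −5, in Ω¹_R/dR one has (class of t^l u dt) = P_{−3,−l−4}·(c ω_{−3} + ω_{−1}). -/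
noncomputable section
open Polynomial LaurentPolynomial

/-- The ring `R = ℂ[t,t⁻¹][u]/(u² − (t⁴ − 2ct² + 1))`, realized by adjoining a root `u`
of `X² − (t⁴ − 2ct² + 1)` to the ring of Laurent polynomials `ℂ[t,t⁻¹]`. -/
abbrev DJKM (c : ℂ) : Type :=
  AdjoinRoot ((X : Polynomial (LaurentPolynomial ℂ)) ^ 2 -
    Polynomial.C (T 4 - 2 * LaurentPolynomial.C c * T 2 + 1))

/-- The element `t^i` of `R`, for `i : ℤ`. -/
def tp (c : ℂ) (i : ℤ) : DJKM c := AdjoinRoot.of _ (T i)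

/-- The element `u` of `R`. -/
def uu (c : ℂ) : DJKM c := AdjoinRoot.root _

/-- The subspace `dR ⊆ Ω¹_R` of exact differentials. -/
def dR (c : ℂ) : Submodule ℂ (KaehlerDifferential ℂ (DJKM c)) :=
  LinearMap.range (KaehlerDifferential.D ℂ (DJKM c)).toLinearMap

/-- The class of `f·dg` in `Ω¹_R/dR`. -/
def cls (c : ℂ) (f g : DJKM c) : KaehlerDifferential ℂ (DJKM c) ⧸ dR c :=
  Submodule.Quotient.mk (f • KaehlerDifferential.D ℂ (DJKM c) g)

/-- `ω_k` : the class of `t^k·u·dt` in `Ω¹_R/dR`. -/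
def w (c : ℂ) (k : ℤ) : KaehlerDifferential ℂ (DJKM c) ⧸ dR c :=
  cls c (tp c k * uu c) (tp c 1)

/-- `ω₀` : the class of `t⁻¹·dt` in `Ω¹_R/dR`. -/
def w0 (c : ℂ) : KaehlerDifferential ℂ (DJKM c) ⧸ dR c :=
  cls c (tp c (-1)) (tp c 1)


set_option synthInstance.maxHeartbeats 1000000 in
set_option maxHeartbeats 1000000 in
lemma tp_mul' (c : ℂ) (i j : ℤ) : tp c i * tp c j = tp c (i + j) := by
  rw [tp, tp, tp, ← map_mul, ← T_add]

lemma tp_zero' (c : ℂ) : tp c 0 = 1 := by rw [tp, T_zero, map_one]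

lemma smul_djkm (c a : ℂ) (x : DJKM c) : a • x = AdjoinRoot.of _ (LaurentPolynomial.C a) * x := by
  rw [Algebra.smul_def, AdjoinRoot.algebraMap_eq', RingHom.comp_apply,
    LaurentPolynomial.algebraMap_apply, Algebra.algebraMap_self_apply]

lemma uu_sq (c : ℂ) : uu c ^ 2 = tp c 4 - (2*c) • tp c 2 + 1 := by
  have h := AdjoinRoot.mk_self (f := (X : Polynomial (LaurentPolynomial ℂ)) ^ 2 -
    Polynomial.C (T 4 - 2 * LaurentPolynomial.C c * T 2 + 1))
  rw [map_sub, map_pow, AdjoinRoot.mk_X, AdjoinRoot.mk_C, sub_eq_zero] at h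
  have h2 : LaurentPolynomial.C (2*c) = (2 : LaurentPolynomial ℂ) * LaurentPolynomial.C c := by
    rw [map_mul, map_ofNat]
  rw [uu, h, map_add, map_sub, map_one, map_mul, map_mul, smul_djkm, h2, map_mul, map_ofNat,
    tp, tp]

set_option synthInstance.maxHeartbeats 1000000 in
set_option maxHeartbeats 1000000 in
lemma D_tp (c : ℂ) (i : ℤ) : (KaehlerDifferential.D ℂ (DJKM c)) (tp c i) =
    (((i : ℤ) : DJKM c) * tp c (i-1)) • (KaehlerDifferential.D ℂ (DJKM c)) (tp c 1) := by
  set D := KaehlerDifferential.D ℂ (DJKM c) with hD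
  have nat : ∀ n : ℕ, D (tp c n) = (((n : ℤ) : DJKM c) * tp c (n-1)) • D (tp c 1) := by
    intro n
    induction n with
    | zero => simp [tp_zero']
    | succ n ih =>
        push_cast
        rw [show tp c ((n:ℤ)+1) = tp c n * tp c 1 from (tp_mul' c n 1).symm]
        rw [Derivation.leibniz, ih, smul_smul]
        rw [show ((n:ℤ)+1-1 : ℤ) = (n:ℤ) from by ring]
        rw [← add_smul]
        congr 1
        have h1 : tp c 1 * tp c ((n:ℤ)-1) = tp c ((n:ℤ)) := by
          rw [tp_mul']; congr 1; ring
        push_cast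
        calc tp c ↑n + tp c 1 * (↑n * tp c (↑n - 1))
            = tp c ↑n + (↑n : DJKM c) * (tp c 1 * tp c ((n:ℤ)-1)) := by ring
          _ = (↑n + 1) * tp c ↑n := by rw [h1]; ring
  rcases le_or_gt 0 i with h | h
  · obtain ⟨n, rfl⟩ := Int.eq_ofNat_of_zero_le h
    exact nat n
  · obtain ⟨n, rfl⟩ : ∃ n : ℕ, i = -(n:ℤ) := ⟨i.natAbs, by omega⟩
    have hmul : tp c (-(n:ℤ)) * tp c n = 1 := by rw [tp_mul']; norm_num [tp_zero']
    have := D.leibniz_of_mul_eq_one hmul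
    rw [this, nat n, smul_smul]
    congr 1
    have h2 : tp c (-(n:ℤ)) ^ 2 = tp c (-2*(n:ℤ)) := by
      rw [sq, tp_mul']; congr 1; ring
    rw [h2]
    have h3 : tp c (-2*(n:ℤ)) * tp c ((n:ℤ)-1) = tp c (-(n:ℤ)-1) := by
      rw [tp_mul']; congr 1; ring
    push_cast
    calc -tp c (-2*(n:ℤ)) * ((n:DJKM c) * tp c ((n:ℤ)-1))
        = -(n:DJKM c) * (tp c (-2*(n:ℤ)) * tp c ((n:ℤ)-1)) := by ring
      _ = -(n:DJKM c) * tp c (-(n:ℤ)-1) := by rw [h3]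

set_option synthInstance.maxHeartbeats 1000000 in
set_option maxHeartbeats 1000000 in
lemma D_tp' (c : ℂ) (i : ℤ) : (KaehlerDifferential.D ℂ (DJKM c)) (tp c i) =
    ((i : ℂ)) • (tp c (i-1) • (KaehlerDifferential.D ℂ (DJKM c)) (tp c 1)) := by
  rw [D_tp, mul_smul, Int.cast_smul_eq_zsmul, ← Int.cast_smul_eq_zsmul ℂ]

set_option synthInstance.maxHeartbeats 1000000 in
set_option maxHeartbeats 1000000 in
lemma mkD (c : ℂ) (f : DJKM c) :
    (dR c).mkQ ((KaehlerDifferential.D ℂ (DJKM c)) f) = 0 := by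
  rw [Submodule.mkQ_apply, Submodule.Quotient.mk_eq_zero]
  exact ⟨f, rfl⟩

set_option synthInstance.maxHeartbeats 1000000 in
set_option maxHeartbeats 1000000 in
lemma w_eq (c : ℂ) (k : ℤ) :
    w c k = (dR c).mkQ ((tp c k * uu c) • (KaehlerDifferential.D ℂ (DJKM c)) (tp c 1)) := rfl

set_option synthInstance.maxHeartbeats 1000000 in
set_option maxHeartbeats 1000000 in
lemma hdu (c : ℂ) (n : ℤ) :
    (dR c).mkQ (tp c n • (KaehlerDifferential.D ℂ (DJKM c)) (uu c)) = (-(n:ℂ)) • w c (n-1) := by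
  have h := mkD c (tp c n * uu c)
  rw [Derivation.leibniz, D_tp'] at h
  have e : uu c • ((n : ℂ) • (tp c (n-1) • (KaehlerDifferential.D ℂ (DJKM c)) (tp c 1)))
      = (n : ℂ) • ((tp c (n-1) * uu c) • (KaehlerDifferential.D ℂ (DJKM c)) (tp c 1)) := by
    rw [smul_comm, smul_smul]; module
  simp only [e, map_add, map_smul] at h
  rw [← w_eq] at h
  linear_combination (norm := module) h

set_option synthInstance.maxHeartbeats 1000000 in
set_option maxHeartbeats 1000000 in
lemma relE (c : ℂ) (m : ℤ) :
    (2*(m:ℂ)+12) • w c (m+3) = (4*c*((m:ℂ)+3)) • w c (m+1) - (2*(m:ℂ)) • w c (m-1) := by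
  have H : uu c • (KaehlerDifferential.D ℂ (DJKM c)) (uu c)
        + uu c • (KaehlerDifferential.D ℂ (DJKM c)) (uu c)
      = (4:ℂ) • (tp c 3 • (KaehlerDifferential.D ℂ (DJKM c)) (tp c 1))
        - (4*c) • (tp c 1 • (KaehlerDifferential.D ℂ (DJKM c)) (tp c 1)) := by
    have h1 : (KaehlerDifferential.D ℂ (DJKM c)) (uu c ^ 2)
        = uu c • (KaehlerDifferential.D ℂ (DJKM c)) (uu c)
          + uu c • (KaehlerDifferential.D ℂ (DJKM c)) (uu c) := by
      simp only [pow_two, Derivation.leibniz]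
    have h2 : (KaehlerDifferential.D ℂ (DJKM c)) (uu c ^ 2)
        = (4:ℂ) • (tp c 3 • (KaehlerDifferential.D ℂ (DJKM c)) (tp c 1))
          - (4*c) • (tp c 1 • (KaehlerDifferential.D ℂ (DJKM c)) (tp c 1)) := by
      rw [uu_sq]
      simp only [map_add, map_sub, Derivation.map_smul, D_tp' c 4, D_tp' c 2,
        Derivation.map_one_eq_zero]
      match_scalars <;> · push_cast [map_ofNat]; try norm_num <;> ring
    rw [← h1, h2]
  have tm : tp c m * uu c ^ 2 = tp c (m+4) - (2*c) • tp c (m+2) + tp c m := by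
    rw [uu_sq, mul_add, mul_sub, mul_smul_comm, tp_mul', tp_mul', mul_one]
  have EL : (tp c m * uu c) • (uu c • (KaehlerDifferential.D ℂ (DJKM c)) (uu c))
      = tp c (m+4) • (KaehlerDifferential.D ℂ (DJKM c)) (uu c)
        - (2*c) • (tp c (m+2) • (KaehlerDifferential.D ℂ (DJKM c)) (uu c))
        + tp c m • (KaehlerDifferential.D ℂ (DJKM c)) (uu c) := by
    rw [smul_smul, show (tp c m * uu c) * uu c = tp c m * uu c ^ 2 by ring, tm]
    simp only [sub_smul, add_smul, smul_assoc]
  have p3 : (tp c m * uu c) * tp c 3 = tp c (m+3) * uu c := by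
    rw [mul_right_comm, tp_mul']
  have p1 : (tp c m * uu c) * tp c 1 = tp c (m+1) * uu c := by
    rw [mul_right_comm, tp_mul']
  have ER : (tp c m * uu c) • ((4:ℂ) • (tp c 3 • (KaehlerDifferential.D ℂ (DJKM c)) (tp c 1))
        - (4*c) • (tp c 1 • (KaehlerDifferential.D ℂ (DJKM c)) (tp c 1)))
      = (4:ℂ) • ((tp c (m+3) * uu c) • (KaehlerDifferential.D ℂ (DJKM c)) (tp c 1))
        - (4*c) • ((tp c (m+1) * uu c) • (KaehlerDifferential.D ℂ (DJKM c)) (tp c 1)) := by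
    simp only [smul_sub, smul_comm (tp c m * uu c) (4:ℂ), smul_comm (tp c m * uu c) (4*c),
      smul_smul, p3, p1]
  have q1 := congrArg (dR c).mkQ EL
  simp only [map_add, map_sub, map_smul, hdu] at q1
  have q2 := congrArg (dR c).mkQ ER
  simp only [map_sub, map_smul, ← w_eq] at q2
  have qH := congrArg
    (fun x : KaehlerDifferential ℂ (DJKM c) => (dR c).mkQ ((tp c m * uu c) • x)) H
  simp only [smul_add, map_add] at qH
  simp only [show m+4-1 = m+3 from by ring, show m+2-1 = m+1 from by ring] at q1
  push_cast at q1 q2 qH ⊢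
  linear_combination (norm := module) (2:ℂ) • q1 - q2 - qH

set_option synthInstance.maxHeartbeats 1000000 in
set_option maxHeartbeats 1000000 in
lemma key (c : ℂ) (P : ℤ → ℂ)
    (h3 : P (-3) = 1) (h1 : P (-1) = 0)
    (hrec : ∀ k : ℤ, 0 ≤ k →
      ((6 : ℂ) + 2 * (k : ℂ)) * P k = 4 * (k : ℂ) * c * P (k - 2) - 2 * ((k : ℂ) - 3) * P (k - 4)) :
    ∀ n : ℕ, w c (-2*(n:ℤ)-5) = P (2*(n:ℤ)+1) • (c • w c (-3) + w c (-1)) := by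
  intro n
  induction n using Nat.strong_induction_on with
  | _ n ih =>
    match n, ih with
    | 0, _ =>
        have E0 := relE c (-4)
        simp only [show (-4:ℤ)+3 = -1 from by norm_num, show (-4:ℤ)+1 = -3 from by norm_num,
          show (-4:ℤ)-1 = -5 from by norm_num] at E0
        have hr := hrec 1 (by norm_num)
        simp only [show (1:ℤ)-2 = -1 from by norm_num, show (1:ℤ)-4 = -3 from by norm_num,
          h1, h3] at hr
        push_cast at E0 hr ⊢
        have hne : (8:ℂ) ≠ 0 := by norm_num
        apply smul_right_injective _ hne
        show (8:ℂ) • w c (-5) = (8:ℂ) • (P 1 • (c • w c (-3) + w c (-1)))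
        linear_combination (norm := module) -E0 - hr • (c • w c (-3) + w c (-1))
    | 1, ih =>
        have ih0 := ih 0 (by norm_num)
        simp only [show (-2*((0:ℕ):ℤ)-5 : ℤ) = -5 from by norm_num,
          show (2*((0:ℕ):ℤ)+1 : ℤ) = 1 from by norm_num] at ih0
        have E1 := relE c (-6)
        simp only [show (-6:ℤ)+3 = -3 from by norm_num, show (-6:ℤ)+1 = -5 from by norm_num,
          show (-6:ℤ)-1 = -7 from by norm_num] at E1
        have hr := hrec 3 (by norm_num)
        simp only [show (3:ℤ)-2 = 1 from by norm_num, show (3:ℤ)-4 = -1 from by norm_num,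
          h1] at hr
        push_cast at E1 hr ⊢
        have hne : (12:ℂ) ≠ 0 := by norm_num
        apply smul_right_injective _ hne
        show (12:ℂ) • w c (-7) = (12:ℂ) • (P 3 • (c • w c (-3) + w c (-1)))
        linear_combination (norm := module) -E1 + (12*c) • ih0 - hr • (c • w c (-3) + w c (-1))
    | (n+2), ih =>
        have ihn := ih n (by omega)
        have ihn1 := ih (n+1) (by omega)
        have Em := relE c (-2*(n:ℤ)-8)
        simp only [show (-2*(n:ℤ)-8)+3 = -2*(n:ℤ)-5 from by ring,
          show (-2*(n:ℤ)-8)+1 = -2*(n:ℤ)-7 from by ring,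
          show (-2*(n:ℤ)-8)-1 = -2*(n:ℤ)-9 from by ring] at Em
        have hr := hrec (2*(n:ℤ)+5) (by positivity)
        simp only [show (2*(n:ℤ)+5)-2 = 2*(n:ℤ)+3 from by ring,
          show (2*(n:ℤ)+5)-4 = 2*(n:ℤ)+1 from by ring] at hr
        push_cast at Em hr ihn ihn1 ⊢
        simp only [show (-2*((n:ℤ)+1)-5 : ℤ) = -2*(n:ℤ)-7 from by ring,
          show (2*((n:ℤ)+1)+1 : ℤ) = 2*(n:ℤ)+3 from by ring] at ihn1
        simp only [show (-2*((n:ℤ)+2)-5 : ℤ) = -2*(n:ℤ)-9 from by ring,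
          show (2*((n:ℤ)+2)+1 : ℤ) = 2*(n:ℤ)+5 from by ring]
        have hne : (4*(n:ℂ)+16) ≠ 0 := by
          have : ((4*n+16 : ℕ) : ℂ) ≠ 0 := Nat.cast_ne_zero.2 (by omega)
          push_cast at this
          convert this using 2
        apply smul_right_injective _ hne
        show (4*(n:ℂ)+16) • w c (-2*(n:ℤ)-9)
            = (4*(n:ℂ)+16) • (P (2*(n:ℤ)+5) • (c • w c (-3) + w c (-1)))
        linear_combination (norm := module) -Em + (-4*(n:ℂ)-4) • ihn
          + ((8*(n:ℂ)+20)*c) • ihn1 - hr • (c • w c (-3) + w c (-1))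

/-- For odd `l ≤ −5`, the class of `t^l u dt` equals `P_{−3,−l−4}·(c·ω₋₃ + ω₋₁)`. -/
theorem stmt9 (c : ℂ) (P : ℤ → ℂ)
    (h4 : P (-4) = 0) (h3 : P (-3) = 1) (h2 : P (-2) = 0) (h1 : P (-1) = 0)
    (hrec : ∀ k : ℤ, 0 ≤ k →
      ((6 : ℂ) + 2 * (k : ℂ)) * P k = 4 * (k : ℂ) * c * P (k - 2) - 2 * ((k : ℂ) - 3) * P (k - 4)) :
    ∀ l : ℤ, l ≤ -5 → Odd l → w c l = P (-l - 4) • (c • w c (-3) + w c (-1)) := by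
  intro l hl hodd
  obtain ⟨n, hn⟩ : ∃ n : ℕ, l = -2*(n:ℤ)-5 := by
    obtain ⟨j, hj⟩ := hodd
    exact ⟨(-l-5).toNat / 2, by omega⟩
  subst hn
  have hk := key c P h3 h1 hrec n
  simpa only [show -(-2*(n:ℤ)-5) - 4 = 2*(n:ℤ)+1 from by ring] using hk
end
end

section
/- Let c ∈ ℂ and R = ℂ[t, t^{-1}, u | u² = t⁴ − 2ct² + 1]. Let (P_{−4,k})_{k ≥ −4} and (P_{−2,k})_{k ≥ −4} be the sequences of complex numbers each satisfying the recursion (6+2k)P_k = 4kc·P_{k−2} − 2(k−3)·P_{k−4} for k ≥ 0, with initial values P_{−4,−4} = 1, P_{−4,−3} = P_{−4,−2} = P_{−4,−1} = 0 and P_{−2,−2} = 1, P_{−2,−4} = P_{−2,−3} = P_{−2,−1} = 0 respectively. Then for every even integer k ≥ 0, in Ω¹_R/dR one has (class of t^k u dt) = P_{−4,k}·ω_{−4} + P_{−2,k}·ω_{−2}. -/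
set_option synthInstance.maxHeartbeats 1000000
set_option maxHeartbeats 2000000


noncomputable section
open Polynomial LaurentPolynomial

variable (c : ℂ)

def DD (c : ℂ) : Derivation ℂ (DJKM c) (KaehlerDifferential ℂ (DJKM c)) :=
  KaehlerDifferential.D ℂ (DJKM c)

variable (c : ℂ)

lemma tpmul (i j : ℤ) : tp c i * tp c j = tp c (i+j) := by
  rw [tp, tp, tp, ← map_mul, ← T_add]

lemma tpmul' (i j k : ℤ) (h : i + j = k) : tp c i * tp c j = tp c k := by
  rw [tpmul, h]

lemma tpzero : tp c 0 = 1 := by rw [tp, T_zero, map_one]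

lemma Dtp_neg_one : DD c (tp c (-1)) = -(tp c (-2) • DD c (tp c 1)) := by
  have h0 : tp c 1 * tp c (-1) = 1 := by rw [tpmul' c 1 (-1) 0 (by ring), tpzero]
  have h := (DD c).leibniz (tp c 1) (tp c (-1))
  rw [h0, Derivation.map_one_eq_zero] at h
  have h2 := congrArg (fun ξ => tp c (-1) • ξ) h.symm
  simp only [smul_add, smul_smul, smul_zero] at h2
  rw [tpmul' c (-1) 1 0 (by ring), tpzero, one_smul,
    tpmul' c (-1) (-1) (-2) (by ring)] at h2
  linear_combination (norm := module) h2

lemma Dtp (i : ℤ) : DD c (tp c i) = (i : ℂ) • (tp c (i-1) • DD c (tp c 1)) := by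
  induction i using Int.induction_on with
  | zero => simp [tpzero]
  | succ n ih =>
      rw [← tpmul' c n 1 (n+1) rfl, (DD c).leibniz, ih]
      rw [smul_comm, smul_smul, tpmul' c 1 ((n:ℤ)-1) ((n:ℤ)+1-1) (by ring)]
      push_cast
      have h2 : tp c ((n:ℤ)+1-1) = tp c (n:ℤ) := by norm_num
      rw [h2]
      module
  | pred n ih =>
      rw [show -(n:ℤ)-1 = (-n) + (-1) by ring, ← tpmul' c (-n) (-1) (-n + -1) rfl,
        (DD c).leibniz, ih, Dtp_neg_one]
      rw [smul_neg, smul_smul, tpmul' c (-(n:ℤ)) (-2) (-(n:ℤ) + -1 - 1) (by ring),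
        smul_comm, smul_smul, tpmul' c (-1) (-(n:ℤ)-1) (-(n:ℤ) + -1 - 1) (by ring)]
      push_cast
      module

lemma usq : uu c * uu c = tp c 4 - (2*c) • tp c 2 + 1 := by
  have h : (AdjoinRoot.mk _) ((X : Polynomial (LaurentPolynomial ℂ)) ^ 2 -
      Polynomial.C (T 4 - 2 * LaurentPolynomial.C c * T 2 + 1)) = 0 :=
    AdjoinRoot.mk_self
  rw [map_sub, map_pow, AdjoinRoot.mk_X, AdjoinRoot.mk_C, sub_eq_zero] at h
  rw [← pow_two, uu, h]
  rw [map_add, map_sub, map_one, map_mul, map_mul]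
  rw [tp, tp]
  congr 1
  congr 1
  rw [Algebra.smul_def, IsScalarTower.algebraMap_apply ℂ (LaurentPolynomial ℂ) (DJKM c)]
  rw [LaurentPolynomial.algebraMap_apply, Algebra.algebraMap_self_apply]
  show _ = AdjoinRoot.of _ _ * _
  rw [← map_mul]
  congr 1
  simp [map_mul, map_ofNat]

lemma uDu : uu c • DD c (uu c) =
    (2:ℂ) • (tp c 3 • DD c (tp c 1)) - (2*c) • (tp c 1 • DD c (tp c 1)) := by
  have h := (DD c).leibniz (uu c) (uu c)
  rw [usq] at h
  simp only [map_add, map_sub, Derivation.map_one_eq_zero, Derivation.map_smul,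
    Dtp c 4, Dtp c 2, add_zero] at h
  have h4 : tp c (4-1 : ℤ) = tp c 3 := by norm_num
  have h2 : tp c (2-1 : ℤ) = tp c 1 := by norm_num
  rw [h4, h2] at h
  have := congrArg (fun ξ => (2⁻¹:ℂ) • ξ) h
  simp only [smul_add, smul_sub, smul_smul] at this
  push_cast at this
  rw [← add_smul] at this
  norm_num at this
  convert this.symm using 2 <;> ring


lemma Dusq : DD c (uu c * uu c) =
    (4:ℂ) • (tp c 3 • DD c (tp c 1)) - (4*c) • (tp c 1 • DD c (tp c 1)) := by
  rw [usq]
  simp only [map_add, map_sub, Derivation.map_one_eq_zero, Derivation.map_smul,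
    Dtp c 4, Dtp c 2, add_zero, smul_smul]
  push_cast
  rw [show 2*c*(2:ℂ) = 4*c by ring]

lemma hxA (m j k : ℤ) (h : m + j = k) (ξ : KaehlerDifferential ℂ (DJKM c)) :
    (tp c m * uu c) • (tp c j • ξ) = (tp c k * uu c) • ξ := by
  rw [smul_smul]; congr 1; rw [mul_right_comm, tpmul' c m j k h]

lemma E1 (m : ℤ) : (tp c m * uu c) • DD c (uu c * uu c) =
    (4:ℂ) • ((tp c (m+3) * uu c) • DD c (tp c 1))
    - (4*c) • ((tp c (m+1) * uu c) • DD c (tp c 1)) := by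
  rw [Dusq, smul_sub, smul_comm (tp c m * uu c) (4:ℂ), smul_comm (tp c m * uu c) (4*c),
    hxA c m 3 (m+3) rfl, hxA c m 1 (m+1) rfl]

lemma E2 (m : ℤ) : (uu c * uu c) • (tp c m • DD c (uu c)) =
    (2:ℂ) • ((tp c (m+3) * uu c) • DD c (tp c 1))
    - (2*c) • ((tp c (m+1) * uu c) • DD c (tp c 1)) := by
  rw [smul_smul, show uu c * uu c * tp c m = (tp c m * uu c) * uu c by ring, mul_smul, uDu,
    smul_sub, smul_comm (tp c m * uu c) (2:ℂ), smul_comm (tp c m * uu c) (2*c),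
    hxA c m 3 (m+3) rfl, hxA c m 1 (m+1) rfl]

lemma E3 (m : ℤ) : (uu c * uu c) • ((tp c (m-1) * uu c) • DD c (tp c 1)) =
    (tp c (m+3) * uu c) • DD c (tp c 1)
    - (2*c) • ((tp c (m+1) * uu c) • DD c (tp c 1))
    + (tp c (m-1) * uu c) • DD c (tp c 1) := by
  rw [smul_smul, usq, add_mul, sub_mul, one_mul, smul_mul_assoc, add_smul, sub_smul, smul_assoc]
  refine congrArg₂ (· + ·) (congrArg₂ (· - ·) (congrArg (· • DD c (tp c 1)) ?_)
    (congrArg (fun z => (2*c) • (z • DD c (tp c 1))) ?_)) rfl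
  · rw [← mul_assoc, tpmul' c 4 (m-1) (m+3) (by ring)]
  · rw [← mul_assoc, tpmul' c 2 (m-1) (m+1) (by ring)]

lemma hDx (m : ℤ) : DD c (tp c m * uu c) = tp c m • DD c (uu c)
    + (m:ℂ) • ((tp c (m-1) * uu c) • DD c (tp c 1)) := by
  rw [(DD c).leibniz, Dtp c m]
  congr 1
  rw [smul_comm]
  congr 1
  rw [smul_smul, mul_comm (uu c)]

lemma key_s10 (m : ℤ) : DD c ((tp c m * uu c) * (uu c * uu c)) =
    ((4:ℂ) • ((tp c (m+3) * uu c) • DD c (tp c 1))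
      - (4*c) • ((tp c (m+1) * uu c) • DD c (tp c 1)))
    + (((2:ℂ) • ((tp c (m+3) * uu c) • DD c (tp c 1))
      - (2*c) • ((tp c (m+1) * uu c) • DD c (tp c 1)))
      + (m:ℂ) • ((tp c (m+3) * uu c) • DD c (tp c 1)
        - (2*c) • ((tp c (m+1) * uu c) • DD c (tp c 1))
        + (tp c (m-1) * uu c) • DD c (tp c 1))) := by
  rw [(DD c).leibniz, hDx, smul_add, smul_comm (uu c * uu c) ((m:ℂ)), E1, E2, E3]

lemma keyQ (m : ℤ) : ((m:ℂ)+6) • w c (m+3) =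
    ((2*(m:ℂ)+6)*c) • w c (m+1) - (m:ℂ) • w c (m-1) := by
  have h0 : Submodule.Quotient.mk (p := dR c)
      (DD c ((tp c m * uu c) * (uu c * uu c))) = 0 :=
    (Submodule.Quotient.mk_eq_zero _).2 ⟨_, rfl⟩
  have h := congrArg (Submodule.Quotient.mk (p := dR c)) (key_s10 c m)
  rw [h0] at h
  simp only [Submodule.Quotient.mk_add, Submodule.Quotient.mk_sub,
    Submodule.Quotient.mk_smul] at h
  have e3 : Submodule.Quotient.mk (p := dR c)
      ((tp c (m+3) * uu c) • DD c (tp c 1)) = w c (m+3) := rfl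
  have e1 : Submodule.Quotient.mk (p := dR c)
      ((tp c (m+1) * uu c) • DD c (tp c 1)) = w c (m+1) := rfl
  have em : Submodule.Quotient.mk (p := dR c)
      ((tp c (m-1) * uu c) • DD c (tp c 1)) = w c (m-1) := rfl
  rw [e3, e1, em] at h
  linear_combination (norm := module) -h

/-- For even `k ≥ 0`, the class of `t^k u dt` equals `P_{−4,k}·ω₋₄ + P_{−2,k}·ω₋₂`. -/
theorem stmt10 (c : ℂ) (P4 P2 : ℤ → ℂ)
    (h44 : P4 (-4) = 1) (h43 : P4 (-3) = 0) (h42 : P4 (-2) = 0) (h41 : P4 (-1) = 0)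
    (h24 : P2 (-4) = 0) (h23 : P2 (-3) = 0) (h22 : P2 (-2) = 1) (h21 : P2 (-1) = 0)
    (hrec4 : ∀ k : ℤ, 0 ≤ k →
      ((6 : ℂ) + 2 * (k : ℂ)) * P4 k = 4 * (k : ℂ) * c * P4 (k - 2) - 2 * ((k : ℂ) - 3) * P4 (k - 4))
    (hrec2 : ∀ k : ℤ, 0 ≤ k →
      ((6 : ℂ) + 2 * (k : ℂ)) * P2 k = 4 * (k : ℂ) * c * P2 (k - 2) - 2 * ((k : ℂ) - 3) * P2 (k - 4)) :
    ∀ k : ℤ, 0 ≤ k → Even k → w c k = P4 k • w c (-4) + P2 k • w c (-2) := by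
  have main : ∀ n : ℕ, w c (2*(n:ℤ) - 4) = P4 (2*(n:ℤ)-4) • w c (-4) + P2 (2*(n:ℤ)-4) • w c (-2) := by
    intro n
    induction n using Nat.strong_induction_on with
    | _ n ih =>
      match n, ih with
      | 0, _ => norm_num [h44, h24]
      | 1, _ =>
          norm_num
          rw [h42, h22, zero_smul, one_smul, zero_add]
      | (n+2), ih =>
          have ih1 := ih (n+1) (by omega)
          have ih0 := ih n (by omega)
          set k : ℤ := 2*((n:ℤ)+2) - 4 with hkdef
          have hk : (0:ℤ) ≤ k := by omega
          have hidx : 2*((n+2:ℕ):ℤ) - 4 = k := by push_cast [hkdef]; ring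
          have hi1 : 2*((n+1:ℕ):ℤ) - 4 = k - 2 := by push_cast [hkdef]; ring
          have hi0 : 2*((n:ℕ):ℤ) - 4 = k - 4 := by push_cast [hkdef]; ring
          rw [hi1] at ih1
          rw [hi0] at ih0
          rw [hidx]
          have hW := keyQ c (k-3)
          rw [show k-3+3 = k from by ring, show k-3+1 = k-2 from by ring,
            show k-3-1 = k-4 from by ring, ih1, ih0] at hW
          push_cast at hW
          rw [show (k:ℂ)-3+6 = (k:ℂ)+3 from by ring] at hW
          have hne : ((k:ℂ)+3) ≠ 0 := by
            have h1 : ((k+3:ℤ):ℂ) ≠ 0 := by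
              exact_mod_cast (by omega : (k+3:ℤ) ≠ 0)
            push_cast at h1
            exact h1
          apply smul_right_injective _ hne
          show ((k:ℂ)+3) • w c k = ((k:ℂ)+3) • (P4 k • w c (-4) + P2 k • w c (-2))
          rw [hW]
          match_scalars
          · linear_combination (-1/2 : ℂ) * (hrec4 k hk)
          · linear_combination (-1/2 : ℂ) * (hrec2 k hk)
  intro k hk hev
  obtain ⟨m, rfl⟩ := hev
  have hm : 0 ≤ m := by omega
  have h := main (m.toNat + 2)
  rw [show 2*(((m.toNat+2:ℕ)):ℤ) - 4 = m + m from by omega] at h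
  exact h
end
end
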